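/- Let R > 0 and let f : [0,R] × (ℝ/2πℤ) → ℝ be continuously differentiable. For each c ∈ ℝ/2πℤ let γ_c : [0,1] → [0,R] × (ℝ/2πℤ) be the straight diagonal path γ_c(s) = (Rs, c − 4πs). Assume that for every c ∈ ℝ/2πℤ there exist s₁ < s₂ in [0,1] with |f(γ_c(s₂)) − f(γ_c(s₁))| ≥ 1. Then the Dirichlet energy of f satisfies ∫_{[0,R]×(ℝ/2πℤ)} ((∂f/∂t)² + (∂f/∂θ)²) dt dθ ≥ 2πR/(16π² + R²). -/

import Mathlib

open Real MeasureTheory intervalIntegral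

/-- Crossing estimate for diagonal paths on the flat cylinder `[0,R] × (ℝ/2πℤ)`
(functions on the cylinder are encoded as `2π`-periodic functions in the second
variable).  If along every diagonal path `γ_c(s) = (R s, c − 4π s)` the function `f`
varies by at least `1`, then the Dirichlet energy of `f` is at least
`2πR/(16π² + R²)`. -/
theorem crossing_estimate_diagonal (R : ℝ) (hR : 0 < R) (f : ℝ × ℝ → ℝ)
    (hf : ContDiff ℝ 1 f)
    (hper : ∀ t θ : ℝ, f (t, θ + 2 * π) = f (t, θ))
    (hcross : ∀ c : ℝ, ∃ s₁ s₂ : ℝ, 0 ≤ s₁ ∧ s₁ < s₂ ∧ s₂ ≤ 1 ∧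
      1 ≤ |f (R * s₂, c - 4 * π * s₂) - f (R * s₁, c - 4 * π * s₁)|) :
    2 * π * R / (16 * π ^ 2 + R ^ 2) ≤
      ∫ t in (0:ℝ)..R, ∫ θ in (0:ℝ)..(2 * π),
        (fderiv ℝ f (t, θ) (1, 0)) ^ 2 + (fderiv ℝ f (t, θ) (0, 1)) ^ 2 := by
  have hπ : 0 < π := Real.pi_pos
  have hfd : Differentiable ℝ f := hf.differentiable one_ne_zero
  have hcd : Continuous (fun p => fderiv ℝ f p) := hf.continuous_fderiv one_ne_zero
  set E : ℝ × ℝ → ℝ := fun p => (fderiv ℝ f p (1, 0)) ^ 2 + (fderiv ℝ f p (0, 1)) ^ 2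
    with hE
  have hEc : Continuous E := by
    apply Continuous.add <;> exact (hcd.clm_apply continuous_const).pow 2
  have hEnn : ∀ p, 0 ≤ E p := fun p => by positivity
  -- periodicity of the derivative
  have hperd : ∀ p : ℝ × ℝ, fderiv ℝ f (p.1, p.2 + 2 * π) = fderiv ℝ f p := by
    intro p
    have hT : HasFDerivAt (fun q : ℝ × ℝ => (q.1, q.2 + 2 * π))
        (ContinuousLinearMap.id ℝ (ℝ × ℝ)) p := by
      have : (fun q : ℝ × ℝ => (q.1, q.2 + 2 * π)) = fun q => q + ((0 : ℝ), 2 * π) := by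
        funext q; simp [Prod.ext_iff]
      rw [this]
      simpa using (hasFDerivAt_id p).add_const ((0 : ℝ), 2 * π)
    have hcomp := ((hfd (p.1, p.2 + 2 * π)).hasFDerivAt).comp p hT
    have hfun : (f ∘ fun q : ℝ × ℝ => (q.1, q.2 + 2 * π)) = f := by
      funext q; simp [Function.comp, hper]
    rw [hfun, ContinuousLinearMap.comp_id] at hcomp
    exact hcomp.fderiv.symm
  have hEper : ∀ t θ : ℝ, E (t, θ + 2 * π) = E (t, θ) := by
    intro t θ; simp only [hE]; rw [hperd (t, θ)]
  -- derivative along the diagonal path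
  have hlin : ∀ p : ℝ × ℝ, fderiv ℝ f p (R, -(4 * π)) =
      R * fderiv ℝ f p (1, 0) - 4 * π * fderiv ℝ f p (0, 1) := by
    intro p
    have hvec : ((R, -(4 * π)) : ℝ × ℝ)
        = R • ((1 : ℝ), (0 : ℝ)) + (-(4 * π)) • ((0 : ℝ), (1 : ℝ)) := by
      simp [Prod.ext_iff]
    rw [hvec, map_add, ContinuousLinearMap.map_smul, ContinuousLinearMap.map_smul]
    simp [smul_eq_mul]; ring
  have hγ : ∀ c s : ℝ, HasDerivAt (fun s => f (R * s, c - 4 * π * s))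
      (fderiv ℝ f (R * s, c - 4 * π * s) (R, -(4 * π))) s := by
    intro c s
    have h1 : HasDerivAt (fun s : ℝ => R * s) R s := by
      simpa using (hasDerivAt_id s).const_mul R
    have h2 : HasDerivAt (fun s : ℝ => c - 4 * π * s) (-(4 * π)) s := by
      simpa using ((hasDerivAt_id s).const_mul (4 * π)).const_sub c
    exact (hfd _).hasFDerivAt.comp_hasDerivAt s (h1.prodMk h2)
  set κ : ℝ := (16 * π ^ 2 + R ^ 2)⁻¹ with hκ
  have hden : (0 : ℝ) < 16 * π ^ 2 + R ^ 2 := by positivity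
  -- key pointwise-in-c estimate
  have key1 : ∀ c : ℝ, κ ≤ ∫ s in (0:ℝ)..1, E (R * s, c - 4 * π * s) := by
    intro c
    set g' : ℝ → ℝ := fun s => fderiv ℝ f (R * s, c - 4 * π * s) (R, -(4 * π)) with hg'
    have hg'c : Continuous g' := by
      apply Continuous.clm_apply _ continuous_const
      exact hcd.comp ((continuous_const.mul continuous_id).prodMk
        (continuous_const.sub (continuous_const.mul continuous_id)))
    have hEγc : Continuous (fun s => E (R * s, c - 4 * π * s)) := by
      exact hEc.comp ((continuous_const.mul continuous_id).prodMk
        (continuous_const.sub (continuous_const.mul continuous_id)))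
    obtain ⟨s₁, s₂, h0, h12, h21, hjump⟩ := hcross c
    have hint : ∀ a b : ℝ, IntervalIntegrable g' volume a b :=
      fun a b => hg'c.intervalIntegrable a b
    have hftc : ∫ s in s₁..s₂, g' s =
        f (R * s₂, c - 4 * π * s₂) - f (R * s₁, c - 4 * π * s₁) :=
      intervalIntegral.integral_eq_sub_of_hasDerivAt (fun t _ => hγ c t) (hint s₁ s₂)
    have step1 : 1 ≤ ∫ s in (0:ℝ)..1, |g' s| := by
      calc (1:ℝ) ≤ |∫ s in s₁..s₂, g' s| := by rw [hftc]; exact hjump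
        _ ≤ ∫ s in s₁..s₂, |g' s| :=
          intervalIntegral.abs_integral_le_integral_abs h12.le
        _ ≤ ∫ s in (0:ℝ)..1, |g' s| := by
          apply intervalIntegral.integral_mono_interval h0 h12.le h21
          · exact Filter.Eventually.of_forall fun x => abs_nonneg _
          · exact (hg'c.abs).intervalIntegrable 0 1
    have step2 : 1 ≤ ∫ s in (0:ℝ)..1, (g' s) ^ 2 := by
      have hpt : ∀ x ∈ Set.Icc (0:ℝ) 1, 2 * |g' x| - 1 ≤ (g' x) ^ 2 := by
        intro x _
        nlinarith [sq_nonneg (|g' x| - 1), sq_abs (g' x)]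
      have hmono : (∫ s in (0:ℝ)..1, (2 * |g' s| - 1))
          ≤ ∫ s in (0:ℝ)..1, (g' s) ^ 2 := intervalIntegral.integral_mono_on zero_le_one
        (((continuous_const.mul hg'c.abs).sub continuous_const).intervalIntegrable 0 1)
        ((hg'c.pow 2).intervalIntegrable 0 1) hpt
      have heq : ∫ s in (0:ℝ)..1, (2 * |g' s| - 1)
          = 2 * (∫ s in (0:ℝ)..1, |g' s|) - 1 := by
        rw [intervalIntegral.integral_sub (f := fun s => 2 * |g' s|) ((continuous_const.mul hg'c.abs).intervalIntegrable 0 1)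
          (continuous_const.intervalIntegrable 0 1),
          intervalIntegral.integral_const_mul]
        simp
      rw [heq] at hmono
      linarith
    have step3 : ∫ s in (0:ℝ)..1, (g' s) ^ 2
        ≤ (16 * π ^ 2 + R ^ 2) * ∫ s in (0:ℝ)..1, E (R * s, c - 4 * π * s) := by
      rw [← intervalIntegral.integral_const_mul]
      apply intervalIntegral.integral_mono_on zero_le_one
        ((hg'c.pow 2).intervalIntegrable 0 1)
        ((continuous_const.mul hEγc).intervalIntegrable 0 1)
      intro x _
      have := hlin (R * x, c - 4 * π * x)
      simp only [hg', this, hE, Pi.mul_apply, Pi.pow_apply]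
      nlinarith [sq_nonneg (4 * π * fderiv ℝ f (R * x, c - 4 * π * x) (1, 0)
        + R * fderiv ℝ f (R * x, c - 4 * π * x) (0, 1))]
    rw [hκ, inv_le_iff_one_le_mul₀' hden]  -- maybe adjust
    calc (1:ℝ) ≤ ∫ s in (0:ℝ)..1, (g' s) ^ 2 := step2
      _ ≤ _ := step3
  -- product integrability and Fubini
  set Φ : ℝ × ℝ → ℝ := fun p => E (R * p.2, p.1 - 4 * π * p.2) with hΦ
  have hΦc : Continuous Φ :=
    hEc.comp ((continuous_const.mul continuous_snd).prodMk
      (continuous_fst.sub (continuous_const.mul continuous_snd)))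
  set μ : Measure ℝ := volume.restrict (Set.Ioc 0 (2 * π)) with hμ
  set ν : Measure ℝ := volume.restrict (Set.Ioc (0:ℝ) 1) with hν
  have hprod : μ.prod ν = (volume : Measure (ℝ × ℝ)).restrict
      ((Set.Ioc 0 (2 * π)) ×ˢ (Set.Ioc (0:ℝ) 1)) := by
    rw [hμ, hν, Measure.prod_restrict, ← Measure.volume_eq_prod]
  have hΦint : Integrable Φ (μ.prod ν) := by
    rw [hprod]
    apply (hΦc.continuousOn.integrableOn_compact (isCompact_Icc.prod isCompact_Icc)).mono_set
    exact Set.prod_mono Set.Ioc_subset_Icc_self Set.Ioc_subset_Icc_self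
  have hswap : (∫ c, (∫ s, Φ (c, s) ∂ν) ∂μ) = ∫ s, (∫ c, Φ (c, s) ∂μ) ∂ν :=
    MeasureTheory.integral_integral_swap (f := fun c s => Φ (c, s)) hΦint
  have hμuniv : (μ Set.univ).toReal = 2 * π := by
    rw [hμ]
    simp [Real.volume_Ioc, ENNReal.toReal_ofReal (by positivity : (0:ℝ) ≤ 2 * π), hπ.le]
  -- lower bound for the iterated integral
  have hlhs : 2 * π * κ ≤ ∫ c, (∫ s, Φ (c, s) ∂ν) ∂μ := by
    have hin : ∀ c : ℝ, κ ≤ ∫ s, Φ (c, s) ∂ν := by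
      intro c
      have h := key1 c
      rwa [intervalIntegral.integral_of_le zero_le_one] at h
    have hconst : Integrable (fun _ : ℝ => κ) μ := by
      rw [hμ]
      exact (integrableOn_const_iff).2 (Or.inr (by simp [Real.volume_Ioc]; exact ENNReal.mul_lt_top (by norm_num) ENNReal.ofReal_lt_top))
    calc 2 * π * κ = ∫ _, κ ∂μ := by rw [MeasureTheory.integral_const, measureReal_def, hμuniv, smul_eq_mul]
      _ ≤ ∫ c, (∫ s, Φ (c, s) ∂ν) ∂μ :=
        integral_mono hconst hΦint.integral_prod_left fun c => hin c
  -- compute the other iterated integral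
  have hinner : ∀ s : ℝ, (∫ c, Φ (c, s) ∂μ) = ∫ θ in (0:ℝ)..(2 * π), E (R * s, θ) := by
    intro s
    have h1 : (∫ c, Φ (c, s) ∂μ) = ∫ c in (0:ℝ)..(2 * π), E (R * s, c - 4 * π * s) := by
      rw [intervalIntegral.integral_of_le (by positivity : (0:ℝ) ≤ 2 * π)]
    rw [h1, intervalIntegral.integral_comp_sub_right (fun θ => E (R * s, θ)) (4 * π * s)]
    have hperiodic : Function.Periodic (fun θ => E (R * s, θ)) (2 * π) := fun θ => hEper _ θ
    have h2 : (2 * π - 4 * π * s) = (0 - 4 * π * s) + 2 * π := by ring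
    rw [h2, hperiodic.intervalIntegral_add_eq (0 - 4 * π * s) 0, zero_add]
  have hrhs : (∫ s, (∫ c, Φ (c, s) ∂μ) ∂ν)
      = R⁻¹ * ∫ t in (0:ℝ)..R, ∫ θ in (0:ℝ)..(2 * π), E (t, θ) := by
    have h3 : (∫ s, (∫ c, Φ (c, s) ∂μ) ∂ν)
        = ∫ s in (0:ℝ)..1, (fun t => ∫ θ in (0:ℝ)..(2 * π), E (t, θ)) (R * s) := by
      rw [intervalIntegral.integral_of_le zero_le_one]
      exact integral_congr_ae (Filter.Eventually.of_forall fun s => hinner s)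
    rw [h3, intervalIntegral.integral_comp_mul_left
      (fun t => ∫ θ in (0:ℝ)..(2 * π), E (t, θ)) hR.ne']
    norm_num
  -- combine
  have hfin : 2 * π * κ ≤ R⁻¹ * ∫ t in (0:ℝ)..R, ∫ θ in (0:ℝ)..(2 * π), E (t, θ) := by
    rw [← hrhs, ← hswap]; exact hlhs
  have hEgoal : (∫ t in (0:ℝ)..R, ∫ θ in (0:ℝ)..(2 * π), E (t, θ))
      = ∫ t in (0:ℝ)..R, ∫ θ in (0:ℝ)..(2 * π),
        (fderiv ℝ f (t, θ) (1, 0)) ^ 2 + (fderiv ℝ f (t, θ) (0, 1)) ^ 2 := rfl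
  rw [← hEgoal, div_le_iff₀ hden]
  have h4 := mul_le_mul_of_nonneg_right hfin hR.le
  rw [hκ] at h4
  have h5 : R⁻¹ * (∫ t in (0:ℝ)..R, ∫ θ in (0:ℝ)..(2 * π), E (t, θ)) * R
      = ∫ t in (0:ℝ)..R, ∫ θ in (0:ℝ)..(2 * π), E (t, θ) := by
    field_simp
  rw [h5] at h4
  have h6 : 2 * π * (16 * π ^ 2 + R ^ 2)⁻¹ * R * (16 * π ^ 2 + R ^ 2)
      = 2 * π * R := by field_simp
  nlinarith [h4, hden]
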